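/- Let a be a positive integer and b, c integers with gcd(a, b) = 1 and gcd(a, c) = 1. Define the Dedekind–Rademacher sum D(a; b, c) := (1/a) · Σ_{k=1}^{a−1} cot(πbk/a) · cot(πck/a) (a real number). Then D(a; b, c) = 0 if and only if a divides b² + c². -/

import Mathlib

open Real Finset


lemma gauss1 (n : ℕ) : 2 * ∑ j ∈ Finset.range n, (j : ℤ) = n * (n - 1) := by
  induction n with
  | zero => simp
  | succ n ih => rw [Finset.sum_range_succ]; push_cast; push_cast at ih; ring_nf; ring_nf at ih; linarith

lemma gauss2 (n : ℕ) : 6 * ∑ j ∈ Finset.range n, (j : ℤ)^2 = n * (n - 1) * (2*n - 1) := by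
  induction n with
  | zero => simp
  | succ n ih => rw [Finset.sum_range_succ]; push_cast; push_cast at ih; ring_nf; ring_nf at ih; linarith

lemma ico_eq_range (n : ℕ) (f : ℕ → ℤ) (h0 : f 0 = 0) :
    ∑ j ∈ Finset.Ico 1 n, f j = ∑ j ∈ Finset.range n, f j := by
  rcases Nat.eq_zero_or_pos n with h | h
  · subst h; simp
  · rw [Finset.range_eq_Ico, Finset.sum_eq_sum_Ico_succ_bot h, h0, zero_add]

lemma sum_unit_perm {a : ℕ} [NeZero a] {u : ZMod a} (hu : IsUnit u) {M : Type*} [AddCommMonoid M]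
    (g : ℕ → M) :
    ∑ j ∈ Finset.Ico 1 a, g ((u * j).val) = ∑ j ∈ Finset.Ico 1 a, g j := by
  have hmem : ∀ (v : ZMod a), IsUnit v → ∀ j ∈ Finset.Ico 1 a, (v * j).val ∈ Finset.Ico 1 a := by
    intro v hv j hj
    rw [Finset.mem_Ico] at hj ⊢
    refine ⟨?_, ZMod.val_lt _⟩
    rw [Nat.one_le_iff_ne_zero]
    intro h0
    have : v * (j : ZMod a) = 0 := by
      exact ZMod.val_eq_zero (v * (j:ZMod a)) |>.mp h0
    have hj0 : (j : ZMod a) ≠ 0 := by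
      intro h
      have : (j : ZMod a).val = 0 := by rw [h]; simp
      rw [ZMod.val_natCast_of_lt hj.2] at this
      omega
    exact hj0 (by
      have := hv.mul_left_cancel (by rw [this, mul_zero] : v * (j:ZMod a) = v * 0)
      exact this)
  refine Finset.sum_nbij' (fun j => (u * j).val) (fun j => (u⁻¹ * j).val) (hmem u hu) (hmem u⁻¹ (IsUnit.of_mul_eq_one _ (ZMod.inv_mul_of_unit u hu))) ?_ ?_ ?_
  · intro j hj
    rw [Finset.mem_Ico] at hj
    show (u⁻¹ * (((u * (j:ZMod a)).val : ℕ) : ZMod a)).val = j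
    rw [ZMod.natCast_val, ZMod.cast_id, ← mul_assoc, ZMod.inv_mul_of_unit u hu, one_mul,
      ZMod.val_natCast_of_lt hj.2]
  · intro j hj
    rw [Finset.mem_Ico] at hj
    show (u * (((u⁻¹ * (j:ZMod a)).val : ℕ) : ZMod a)).val = j
    rw [ZMod.natCast_val, ZMod.cast_id, ← mul_assoc, ZMod.mul_inv_of_unit u hu, one_mul,
      ZMod.val_natCast_of_lt hj.2]
  · intro j hj; rfl


lemma cot_complex (θ : ℝ) (hs : Real.sin θ ≠ 0) :
    (Real.cot θ : ℂ) = Complex.I * (Complex.exp (2 * θ * Complex.I) + 1)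
      / (Complex.exp (2 * θ * Complex.I) - 1) := by
  have he2 : Complex.exp (2 * θ * Complex.I) = Complex.exp (θ * Complex.I) ^ 2 := by
    rw [← Complex.exp_nat_mul]; congr 1; push_cast; ring
  have hc : Complex.sin ↑θ ^ 2 + Complex.cos ↑θ ^ 2 = 1 := Complex.sin_sq_add_cos_sq _
  have hexp : Complex.exp ((θ:ℂ) * Complex.I) = Complex.cos ↑θ + Complex.sin ↑θ * Complex.I :=
    Complex.exp_mul_I _
  have hplus : Complex.exp (2 * θ * Complex.I) + 1
      = Complex.exp (θ * Complex.I) * (2 * (Real.cos θ : ℂ)) := by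
    rw [he2, hexp, Complex.ofReal_cos]
    linear_combination (Complex.sin (θ:ℂ))^2 * Complex.I_sq - hc
  have hminus : Complex.exp (2 * θ * Complex.I) - 1
      = Complex.exp (θ * Complex.I) * (2 * Complex.I * (Real.sin θ : ℂ)) := by
    rw [he2, hexp, Complex.ofReal_sin]
    linear_combination -(Complex.sin (θ:ℂ))^2 * Complex.I_sq + hc
  rw [Real.cot_eq_cos_div_sin, hplus, hminus, Complex.ofReal_div]
  have h0 : Complex.exp ((θ:ℂ) * Complex.I) ≠ 0 := Complex.exp_ne_zero _
  have hs' : (Real.sin θ : ℂ) ≠ 0 := Complex.ofReal_ne_zero.mpr hs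
  rw [div_eq_div_iff hs' (by
    refine mul_ne_zero h0 (mul_ne_zero (mul_ne_zero two_ne_zero Complex.I_ne_zero) hs'))]
  ring

lemma fourier_sum {a : ℕ} (ha : 0 < a) {ω : ℂ} (h1 : ω ≠ 1) (h2 : ω ^ a = 1) :
    ∑ j ∈ Finset.Ico 1 a, ((2 * j - a : ℤ) : ℂ) * ω ^ j = a * (ω + 1) / (ω - 1) := by
  have hω : ω - 1 ≠ 0 := sub_ne_zero.mpr h1
  have hgeom : ∑ j ∈ Finset.range a, ω ^ j = 0 := by
    rw [geom_sum_eq h1, h2, sub_self, zero_div]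
  -- key : (ω - 1) * ∑ j ∈ range a, j * ω ^ j = a
  have key : (ω - 1) * ∑ j ∈ Finset.range a, (j : ℂ) * ω ^ j = a := by
    have e1 : ∑ j ∈ Finset.range a, (j : ℂ) * ω ^ (j + 1)
        = ∑ j ∈ Finset.range a, ((j : ℂ) + 1) * ω ^ (j + 1) - ∑ j ∈ Finset.range a, ω ^ (j+1) := by
      rw [← Finset.sum_sub_distrib]
      exact Finset.sum_congr rfl (fun j hj => by ring)
    have e2 : ∑ j ∈ Finset.range a, ((j : ℂ) + 1) * ω ^ (j + 1)
        = ∑ j ∈ Finset.range a, (j : ℂ) * ω ^ j + a := by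
      have := Finset.sum_range_succ' (fun j => (j : ℂ) * ω ^ j) a
      rw [Finset.sum_range_succ] at this
      push_cast at this ⊢
      simp only [pow_zero, mul_one, Nat.cast_zero, zero_mul, add_zero] at this
      rw [← this, h2]
      ring
    have e3 : ∑ j ∈ Finset.range a, ω ^ (j+1) = 0 := by
      have : ∑ j ∈ Finset.range a, ω ^ (j+1) = ω * ∑ j ∈ Finset.range a, ω ^ j := by
        rw [Finset.mul_sum]; exact Finset.sum_congr rfl (fun j hj => by ring)
      rw [this, hgeom, mul_zero]
    calc (ω - 1) * ∑ j ∈ Finset.range a, (j : ℂ) * ω ^ j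
        = ∑ j ∈ Finset.range a, (j:ℂ) * ω ^ (j+1) - ∑ j ∈ Finset.range a, (j:ℂ) * ω ^ j := by
          rw [sub_mul, one_mul, Finset.mul_sum]
          congr 1
          exact Finset.sum_congr rfl (fun j hj => by ring)
      _ = (a : ℂ) - ∑ j ∈ Finset.range a, ω ^ (j+1) := by rw [e1, e2]; ring
      _ = a := by rw [e3, sub_zero]
  rw [eq_div_iff hω, ← mul_comm (ω - 1)]
  have split : ∑ j ∈ Finset.Ico 1 a, ((2 * j - a : ℤ) : ℂ) * ω ^ j
      = 2 * ∑ j ∈ Finset.range a, (j : ℂ) * ω ^ j - a * ∑ j ∈ Finset.range a, ω ^ j + a := by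
    have h0 : (((2 * 0 - a : ℤ) : ℂ) * ω ^ 0) = -a := by push_cast; ring
    have : ∑ j ∈ Finset.range a, ((2 * j - a : ℤ) : ℂ) * ω ^ j
        = ((2 * 0 - a : ℤ) : ℂ) * ω ^ 0 + ∑ j ∈ Finset.Ico 1 a, ((2 * j - a : ℤ) : ℂ) * ω ^ j := by
      rw [Finset.range_eq_Ico, Finset.sum_eq_sum_Ico_succ_bot ha]
      norm_num
    have e4 : ∑ j ∈ Finset.range a, ((2 * j - a : ℤ) : ℂ) * ω ^ j
        = 2 * ∑ j ∈ Finset.range a, (j : ℂ) * ω ^ j - a * ∑ j ∈ Finset.range a, ω ^ j := by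
      rw [Finset.mul_sum, Finset.mul_sum, ← Finset.sum_sub_distrib]
      exact Finset.sum_congr rfl (fun j hj => by push_cast; ring)
    rw [e4] at this
    rw [h0] at this
    linear_combination -this
  rw [split, hgeom]
  linear_combination 2 * key


lemma arith_iff {a : ℕ} [NeZero a] {u : ZMod a} (hu : IsUnit u) :
    4 * (∑ j ∈ Finset.Ico 1 a, (j : ℤ) * ((u * j : ZMod a)).val) = (a:ℤ)^2 * ((a:ℤ) - 1) ↔
      u^2 = -1 := by
  have ha : 0 < a := Nat.pos_of_ne_zero (NeZero.ne a)
  set H : ℕ := u.val with hH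
  have hHu : ((H : ℕ) : ZMod a) = u := by rw [hH, ZMod.natCast_val, ZMod.cast_id]
  have hval : ∀ j ∈ Finset.Ico 1 a, ((u * j : ZMod a)).val = (H * j) % a := by
    intro j hj
    rw [Finset.mem_Ico] at hj
    rw [ZMod.val_mul, ZMod.val_natCast_of_lt hj.2]
  set m : ℕ → ℕ := fun j => (H * j) % a with hm
  set f : ℕ → ℕ := fun j => (H * j) / a with hf
  have hEuclid : ∀ j : ℕ, (m j : ℤ) = (H:ℤ) * j - a * f j := by
    intro j
    have h := Nat.div_add_mod (H * j) a
    have h2 : ((a:ℤ) * (f j : ℤ) + (m j : ℤ)) = (H:ℤ) * (j:ℤ) := by exact_mod_cast congrArg (Nat.cast : ℕ → ℤ) h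
    linarith
  set S1 : ℤ := ∑ j ∈ Finset.Ico 1 a, (j : ℤ) with hS1
  set S2 : ℤ := ∑ j ∈ Finset.Ico 1 a, (j : ℤ)^2 with hS2
  set F2 : ℤ := ∑ j ∈ Finset.Ico 1 a, (f j : ℤ)^2 with hF2
  set Phi : ℤ := ∑ j ∈ Finset.Ico 1 a, (j : ℤ) * f j with hPhi
  set T : ℤ := ∑ j ∈ Finset.Ico 1 a, (j : ℤ) * ((u * j : ZMod a)).val with hT
  have hTm : T = ∑ j ∈ Finset.Ico 1 a, (j : ℤ) * m j :=
    Finset.sum_congr rfl (fun j hj => by rw [hval j hj])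
  have hsm : ∑ j ∈ Finset.Ico 1 a, (m j : ℤ) = S1 := by
    rw [hS1, ← sum_unit_perm hu (fun n => (n : ℤ))]
    exact Finset.sum_congr rfl (fun j hj => by rw [hval j hj])
  have hsm2 : ∑ j ∈ Finset.Ico 1 a, (m j : ℤ)^2 = S2 := by
    rw [hS2, ← sum_unit_perm hu (fun n => (n : ℤ)^2)]
    exact Finset.sum_congr rfl (fun j hj => by rw [hval j hj])
  have hA0 : ∑ j ∈ Finset.Ico 1 a, (m j : ℤ)^2 = (H:ℤ)^2 * S2 - 2*a*H*Phi + (a:ℤ)^2*F2 := by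
    rw [hS2, hPhi, hF2, Finset.mul_sum, Finset.mul_sum, Finset.mul_sum,
      ← Finset.sum_sub_distrib, ← Finset.sum_add_distrib]
    exact Finset.sum_congr rfl (fun j hj => by rw [hEuclid j]; ring)
  have hA : S2 = (H:ℤ)^2 * S2 - 2*a*H*Phi + (a:ℤ)^2*F2 := by rw [hsm2] at hA0; exact hA0
  have hB : T = (H:ℤ) * S2 - a * Phi := by
    rw [hTm, hS2, hPhi, Finset.mul_sum, Finset.mul_sum, ← Finset.sum_sub_distrib]
    exact Finset.sum_congr rfl (fun j hj => by rw [hEuclid j]; ring)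
  have hstar : 2*(H:ℤ)*T = ((H:ℤ)^2+1)*S2 - (a:ℤ)^2*F2 := by
    linear_combination 2*(H:ℤ)*hB - hA
  have h6S2 : 6 * S2 = a * (a-1) * (2*a-1) := by
    rw [hS2, ico_eq_range a _ (by norm_num)]; exact gauss2 a
  have h2S1 : 2 * S1 = a * (a-1) := by
    rw [hS1, ico_eq_range a _ (by norm_num)]; exact gauss1 a
  constructor
  · intro h4T
    -- 12 H T = 3 H a^2 (a-1); from hstar*6 : 12 H T = (H^2+1)*6S2 - 6a^2 F2
    have key : (a:ℤ) * (3*(H:ℤ)*a*(a-1)) = (a:ℤ) * (((H:ℤ)^2+1)*(a-1)*(2*a-1) - 6*a*F2) := by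
      linear_combination 6*hstar + ((H:ℤ)^2+1) * h6S2 - 3*(H:ℤ)*h4T
    have ha0 : (a:ℤ) ≠ 0 := by exact_mod_cast ha.ne'
    have key2 := mul_left_cancel₀ ha0 key
    have key3 := congrArg (Int.cast : ℤ → ZMod a) key2
    push_cast at key3
    rw [hHu] at key3
    simp only [ZMod.natCast_self, zero_mul, mul_zero, zero_sub, sub_zero, zero_add] at key3
    -- key3 : something like 0 = (u^2+1)*(0-1)*(0-1) - 0
    linear_combination -key3
  · intro hu2
    have hvalneg : ∀ j ∈ Finset.Ico 1 a, ((u * ((u * (j:ZMod a)).val : ℕ) : ZMod a)).val = a - j := by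
      intro j hj
      rw [Finset.mem_Ico] at hj
      rw [ZMod.natCast_val, ZMod.cast_id, ← mul_assoc]
      have : u * u = -1 := by rw [← pow_two]; exact hu2
      rw [this, neg_one_mul, ZMod.neg_val]
      rw [if_neg, ZMod.val_natCast_of_lt hj.2]
      intro h
      have : (j : ZMod a).val = 0 := by rw [h]; simp
      rw [ZMod.val_natCast_of_lt hj.2] at this
      omega
    have hperm := sum_unit_perm hu (fun n => (n : ℤ) * ((u * n : ZMod a)).val)
    rw [← hT] at hperm
    have : ∑ j ∈ Finset.Ico 1 a, (((u * (j:ZMod a)).val : ℤ) * ((u * (((u * (j:ZMod a)).val : ℕ) : ZMod a)).val : ℤ))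
        = ∑ j ∈ Finset.Ico 1 a, (((u * (j:ZMod a)).val : ℤ) * ((a:ℤ) - j)) := by
      refine Finset.sum_congr rfl (fun j hj => ?_)
      rw [hvalneg j hj]
      rw [Finset.mem_Ico] at hj
      congr 1
      push_cast [Nat.cast_sub hj.2.le]
      ring
    rw [this] at hperm
    have expand : ∑ j ∈ Finset.Ico 1 a, (((u * (j:ZMod a)).val : ℤ) * ((a:ℤ) - j))
        = a * S1 - T := by
      have e1 : ∀ j ∈ Finset.Ico 1 a, (((u * (j:ZMod a)).val : ℤ) * ((a:ℤ) - j))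
          = (a:ℤ) * ((u * (j:ZMod a)).val : ℤ) - (j:ℤ) * ((u * (j:ZMod a)).val : ℤ) := by
        intro j hj; ring
      rw [Finset.sum_congr rfl e1, Finset.sum_sub_distrib, ← Finset.mul_sum, ← hT]
      congr 1
      rw [← hsm]
      congr 1
      exact Finset.sum_congr rfl (fun j hj => by rw [hval j hj])
    rw [expand] at hperm
    -- hperm : a * S1 - T = T
    linear_combination (a:ℤ)*h2S1 - 2*hperm


lemma sumB {a : ℕ} : ∑ j ∈ Finset.Ico 1 a, (2 * (j:ℤ) - a) = 0 := by
  rcases Nat.eq_zero_or_pos a with h | h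
  · subst h; simp
  · have h1 : ∑ j ∈ Finset.Ico 1 a, (2 * (j:ℤ) - a)
        = 2 * (∑ j ∈ Finset.range a, (j:ℤ)) - (a - 1) * a := by
      rw [Finset.sum_sub_distrib, ← Finset.mul_sum]
      have : ∑ j ∈ Finset.Ico 1 a, (j : ℤ) = ∑ j ∈ Finset.range a, (j:ℤ) := by
        rw [Finset.range_eq_Ico, Finset.sum_eq_sum_Ico_succ_bot h]
        norm_num
      rw [this, Finset.sum_const, Nat.card_Ico]
      have hc1 : ((a - 1 : ℕ) : ℤ) = (a:ℤ) - 1 := by omega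
      rw [nsmul_eq_mul, hc1]
      try ring
    rw [h1, gauss1 a]; ring

lemma sum_cot_eq {a : ℕ} [NeZero a] {b c : ℤ} (hb : IsUnit ((b : ZMod a))) (hc : IsUnit ((c : ZMod a)))
    {u : ZMod a} (hu : IsUnit u) (huc : (c : ZMod a) * u = -(b : ZMod a)) :
    ∑ k ∈ Finset.Ico 1 a, Real.cot (π * b * k / a) * Real.cot (π * c * k / a)
      = -(1/(a:ℝ)) * ∑ j ∈ Finset.Ico 1 a,
          (((2 * j - a) * (2 * ((u * (j : ZMod a)).val : ℤ) - a) : ℤ) : ℝ) := by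
  have ha : 0 < a := Nat.pos_of_ne_zero (NeZero.ne a)
  have ha0 : (a : ℂ) ≠ 0 := Nat.cast_ne_zero.mpr ha.ne'
  have haR : (a : ℝ) ≠ 0 := Nat.cast_ne_zero.mpr ha.ne'
  set ζ : ℂ := Complex.exp (2 * π * Complex.I / a) with hζdef
  have hζ : IsPrimitiveRoot ζ a := Complex.isPrimitiveRoot_exp a ha.ne'
  have hζz : ζ ≠ 0 := Complex.exp_ne_zero _
  have hζpow : ∀ n : ℤ, ζ ^ n = Complex.exp (n * (2 * π * Complex.I / a)) :=
    fun n => (Complex.exp_int_mul _ n).symm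
  -- nondivisibility
  have hnd : ∀ (d : ℤ), IsUnit ((d : ZMod a)) → ∀ k ∈ Finset.Ico 1 a, ¬ (a:ℤ) ∣ d * k := by
    intro d hd k hk hdvd
    rw [Finset.mem_Ico] at hk
    have h0 : ((d * k : ℤ) : ZMod a) = 0 := by
      rw [ZMod.intCast_zmod_eq_zero_iff_dvd]; exact_mod_cast hdvd
    push_cast at h0
    have hk0 : ((k:ℕ) : ZMod a) ≠ 0 := by
      intro h
      have : ((k:ℕ) : ZMod a).val = 0 := by rw [h]; simp
      rw [ZMod.val_natCast_of_lt hk.2] at this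
      omega
    exact hk0 (by rwa [hd.mul_right_eq_zero] at h0)
  -- the cotangent expansion
  have cotexp : ∀ (d : ℤ), IsUnit ((d : ZMod a)) → ∀ k ∈ Finset.Ico 1 a,
      (Real.cot (π * d * k / a) : ℂ)
        = Complex.I / a * ∑ j ∈ Finset.Ico 1 a, ((2 * j - a : ℤ) : ℂ) * (ζ ^ (d * k : ℤ)) ^ j := by
    intro d hd k hk
    have hnd' := hnd d hd k hk
    have haR : (a : ℝ) ≠ 0 := Nat.cast_ne_zero.mpr ha.ne'
    have hsin : Real.sin (π * d * k / a) ≠ 0 := by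
      intro h
      obtain ⟨n, hn⟩ := Real.sin_eq_zero_iff.mp h
      apply hnd'
      have h1 : (n:ℝ) * π * a = π * d * k := by
        rw [hn, div_mul_cancel₀ _ haR]
      have h2 : π * ((n:ℝ) * a) = π * ((d:ℝ) * k) := by ring_nf; ring_nf at h1; linarith
      have h3 := mul_left_cancel₀ Real.pi_ne_zero h2
      refine ⟨n, ?_⟩
      have h4 : ((d * k : ℤ) : ℝ) = ((a * n : ℤ) : ℝ) := by push_cast; linarith
      exact_mod_cast h4
    have hE : Complex.exp (2 * ((π * d * k / a : ℝ) : ℂ) * Complex.I) = ζ ^ (d * k : ℤ) := by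
      rw [hζpow]
      congr 1
      push_cast
      field_simp
    set ω : ℂ := ζ ^ (d * k : ℤ) with hω
    have hω1 : ω ≠ 1 := fun h => hnd' ((hζ.zpow_eq_one_iff_dvd _).mp h)
    have hωa : ω ^ a = 1 := by
      rw [hω, ← zpow_natCast, ← zpow_mul, mul_comm, zpow_mul, zpow_natCast, hζ.pow_eq_one, one_zpow]
    have := cot_complex (π * d * k / a) hsin
    rw [hE] at this
    rw [this, fourier_sum ha hω1 hωa]
    have hωm : ω - 1 ≠ 0 := sub_ne_zero.mpr hω1
    field_simp
  -- now godhead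
  rw [← Complex.ofReal_inj]
  push_cast [-Complex.ofReal_cot]
  have step1 : ∀ k ∈ Finset.Ico 1 a,
      ((Real.cot (π * b * k / a) : ℂ) * (Real.cot (π * c * k / a) : ℂ))
        = -(1/(a:ℂ)^2) * ∑ j ∈ Finset.Ico 1 a, ∑ l ∈ Finset.Ico 1 a,
            ((2 * j - a : ℤ) : ℂ) * ((2 * l - a : ℤ) : ℂ) * (ζ ^ (b * j + c * l : ℤ)) ^ k := by
    intro k hk
    rw [cotexp b hb k hk, cotexp c hc k hk, mul_mul_mul_comm, Finset.sum_mul_sum]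
    have : Complex.I / a * (Complex.I / a) = -(1/(a:ℂ)^2) := by
      rw [div_mul_div_comm, Complex.I_mul_I]
      ring
    rw [this]
    congr 1
    refine Finset.sum_congr rfl (fun j hj => ?_)
    refine Finset.sum_congr rfl (fun l hl => ?_)
    have hexps : (ζ ^ (b * k : ℤ)) ^ j * (ζ ^ (c * k : ℤ)) ^ l = (ζ ^ (b * j + c * l : ℤ)) ^ k := by
      rw [← zpow_natCast (ζ ^ (b * k : ℤ)), ← zpow_natCast (ζ ^ (c * k : ℤ)),
        ← zpow_natCast (ζ ^ (b * j + c * l : ℤ)), ← zpow_mul, ← zpow_mul, ← zpow_mul,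
        ← zpow_add₀ hζz]
      congr 1
      ring
    rw [← hexps]
    ring
  rw [Finset.sum_congr rfl step1, ← Finset.mul_sum]
  rw [Finset.sum_comm]
  -- now inner sum over k
  have inner : ∀ n : ℤ, ∑ k ∈ Finset.Ico 1 a, (ζ ^ n) ^ k
      = (if (a:ℤ) ∣ n then (a:ℂ) else 0) - 1 := by
    intro n
    have hωa : (ζ ^ n) ^ a = 1 := by
      rw [← zpow_natCast, ← zpow_mul, mul_comm, zpow_mul, zpow_natCast, hζ.pow_eq_one, one_zpow]
    have h1 : ∑ k ∈ Finset.range a, (ζ ^ n) ^ k = if (a:ℤ) ∣ n then (a:ℂ) else 0 := by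
      by_cases hd : (a:ℤ) ∣ n
      · rw [if_pos hd, (hζ.zpow_eq_one_iff_dvd n).mpr hd]
        simp
      · rw [if_neg hd, geom_sum_eq (fun h => hd ((hζ.zpow_eq_one_iff_dvd n).mp h)), hωa,
          sub_self, zero_div]
    have h2 : ∑ k ∈ Finset.range a, (ζ ^ n) ^ k = 1 + ∑ k ∈ Finset.Ico 1 a, (ζ ^ n) ^ k := by
      rw [Finset.range_eq_Ico, Finset.sum_eq_sum_Ico_succ_bot ha, pow_zero]
    rw [h2] at h1
    linear_combination h1
  have swap : ∀ j ∈ Finset.Ico 1 a,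
      (∑ k ∈ Finset.Ico 1 a, ∑ l ∈ Finset.Ico 1 a,
        ((2 * j - a : ℤ) : ℂ) * ((2 * l - a : ℤ) : ℂ) * (ζ ^ (b * j + c * l : ℤ)) ^ k)
      = (a:ℂ) * (((2 * j - a : ℤ) : ℂ) * ((2 * ((u * (j : ZMod a)).val : ℤ) - a : ℤ) : ℂ)) := by
    intro j hj
    rw [Finset.sum_comm]
    have hjmem := Finset.mem_Ico.mp hj
    -- val of u*j
    have hval_mem : (u * (j : ZMod a)).val ∈ Finset.Ico 1 a := by
      rw [Finset.mem_Ico]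
      refine ⟨?_, ZMod.val_lt _⟩
      rw [Nat.one_le_iff_ne_zero]
      intro h0
      have hj0 : ((j:ℕ) : ZMod a) ≠ 0 := by
        intro h
        have : ((j:ℕ) : ZMod a).val = 0 := by rw [h]; simp
        rw [ZMod.val_natCast_of_lt hjmem.2] at this
        omega
      exact hj0 (by
        have := (ZMod.val_eq_zero _).mp h0
        rwa [hu.mul_right_eq_zero] at this)
    have hcond : ∀ l ∈ Finset.Ico 1 a,
        ((a:ℤ) ∣ b * j + c * l ↔ l = (u * (j : ZMod a)).val) := by
      intro l hl
      have hlmem := Finset.mem_Ico.mp hl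
      rw [← ZMod.intCast_zmod_eq_zero_iff_dvd]
      push_cast
      constructor
      · intro h
        have hceq : (c : ZMod a) * l = (c : ZMod a) * (u * (j : ZMod a)) := by
          rw [mul_comm (c : ZMod a) u] at huc
          rw [← mul_assoc, mul_comm (c:ZMod a) u, huc]
          linear_combination h
        have := hc.mul_left_cancel hceq
        have h2 : ((l:ℕ) : ZMod a).val = (u * (j : ZMod a)).val := by rw [this]
        rw [ZMod.val_natCast_of_lt hlmem.2] at h2
        exact h2
      · intro h
        subst h
        have : ((((u * (j : ZMod a)).val : ℕ)) : ZMod a) = u * (j : ZMod a) := by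
          rw [ZMod.natCast_val, ZMod.cast_id]
        rw [this]
        linear_combination (((j:ℕ)) : ZMod a) * huc
    have exp_l : ∀ l ∈ Finset.Ico 1 a,
        (∑ k ∈ Finset.Ico 1 a, ((2 * j - a : ℤ) : ℂ) * ((2 * l - a : ℤ) : ℂ) * (ζ ^ (b * j + c * l : ℤ)) ^ k)
          = ((2 * j - a : ℤ) : ℂ) * ((2 * l - a : ℤ) : ℂ) * ((if (a:ℤ) ∣ (b*j+c*l) then (a:ℂ) else 0) - 1) := by
      intro l hl
      rw [← Finset.mul_sum, inner]
    rw [Finset.sum_congr rfl exp_l]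
    have split : ∑ l ∈ Finset.Ico 1 a,
        ((2 * j - a : ℤ) : ℂ) * ((2 * l - a : ℤ) : ℂ) * ((if (a:ℤ) ∣ (b*j+c*l) then (a:ℂ) else 0) - 1)
        = (∑ l ∈ Finset.Ico 1 a, ((2 * j - a : ℤ) : ℂ) * ((2 * l - a : ℤ) : ℂ) * (if (a:ℤ) ∣ (b*j+c*l) then (a:ℂ) else 0))
          - ((2 * j - a : ℤ) : ℂ) * ∑ l ∈ Finset.Ico 1 a, ((2 * l - a : ℤ) : ℂ) := by
      rw [Finset.mul_sum, ← Finset.sum_sub_distrib]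
      exact Finset.sum_congr rfl (fun l hl => by ring)
    rw [split]
    have hBzero : ∑ l ∈ Finset.Ico 1 a, ((2 * l - a : ℤ) : ℂ) = 0 := by
      have h := congrArg (fun z : ℤ => (z : ℂ)) (sumB (a := a))
      push_cast at h
      push_cast
      convert h using 2
    have hifsum : (∑ l ∈ Finset.Ico 1 a, ((2 * j - a : ℤ) : ℂ) * ((2 * l - a : ℤ) : ℂ)
          * (if (a:ℤ) ∣ (b*j+c*l) then (a:ℂ) else 0))
        = ((2 * j - a : ℤ) : ℂ) * ((2 * ((u * (j : ZMod a)).val : ℤ) - a : ℤ) : ℂ) * a := by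
      rw [Finset.sum_eq_single_of_mem ((u * (j : ZMod a)).val) hval_mem
        (fun l hl hne => by rw [if_neg (fun hdvd => hne ((hcond l hl).mp hdvd)), mul_zero])]
      rw [if_pos ((hcond _ hval_mem).mpr rfl)]
      try push_cast
      try ring
    rw [hifsum, hBzero, mul_zero, sub_zero]
    ring
  rw [Finset.sum_congr rfl swap, ← Finset.mul_sum]
  rw [← mul_assoc]
  have hconst : -(1/(a:ℂ)^2) * (a:ℂ) = -(1/(a:ℂ)) := by
    field_simp
  rw [hconst]
  congr 1
  refine Finset.sum_congr rfl (fun j hj => ?_)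
  push_cast
  ring



/-- The Dedekind–Rademacher sum
`D(a; b, c) = (1/a) · Σ_{k=1}^{a−1} cot(πbk/a) · cot(πck/a)`. -/
noncomputable def dedekindRademacherSum (a : ℕ) (b c : ℤ) : ℝ :=
  (1 / (a : ℝ)) * ∑ k ∈ Finset.Ico 1 a,
    Real.cot (Real.pi * b * k / a) * Real.cot (Real.pi * c * k / a)

theorem dedekindRademacherSum_eq_zero_iff (a : ℕ) (ha : 0 < a) (b c : ℤ)
    (hab : IsCoprime (a : ℤ) b) (hac : IsCoprime (a : ℤ) c) :
    dedekindRademacherSum a b c = 0 ↔ (a : ℤ) ∣ b ^ 2 + c ^ 2 := by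
  haveI : NeZero a := ⟨ha.ne'⟩
  have haR : (a : ℝ) ≠ 0 := Nat.cast_ne_zero.mpr ha.ne'
  -- units
  have hb : IsUnit ((b : ZMod a)) := by
    obtain ⟨x, y, hxy⟩ := hab
    have h := congrArg (fun z : ℤ => (z : ZMod a)) hxy
    push_cast at h
    rw [ZMod.natCast_self, mul_zero, zero_add, mul_comm] at h
    exact IsUnit.of_mul_eq_one _ h
  have hc : IsUnit ((c : ZMod a)) := by
    obtain ⟨x, y, hxy⟩ := hac
    have h := congrArg (fun z : ℤ => (z : ZMod a)) hxy
    push_cast at h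
    rw [ZMod.natCast_self, mul_zero, zero_add, mul_comm] at h
    exact IsUnit.of_mul_eq_one _ h
  set u : ZMod a := -((b : ZMod a) * ((c : ZMod a))⁻¹) with hudef
  have huc : (c : ZMod a) * u = -(b : ZMod a) := by
    have h := ZMod.mul_inv_of_unit _ hc
    rw [hudef]
    linear_combination (-(b : ZMod a)) * h
  have hu : IsUnit u := by
    have h : u = ((c : ZMod a))⁻¹ * (-(b : ZMod a)) := by rw [hudef]; ring
    rw [h]
    exact (IsUnit.of_mul_eq_one _ (ZMod.inv_mul_of_unit _ hc)).mul hb.neg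
  -- rewrite the sum
  rw [dedekindRademacherSum, sum_cot_eq hb hc hu huc]
  -- integer bookkeeping
  set T : ℤ := ∑ j ∈ Finset.Ico 1 a, (j : ℤ) * ((u * j : ZMod a)).val with hT
  set S1 : ℤ := ∑ j ∈ Finset.Ico 1 a, (j : ℤ) with hS1
  have hsm : ∑ j ∈ Finset.Ico 1 a, (((u * j : ZMod a)).val : ℤ) = S1 :=
    sum_unit_perm hu (fun n => (n : ℤ))
  have h2S1 : 2 * S1 = a * (a - 1) := by
    rw [hS1, ico_eq_range a _ (by norm_num)]; exact gauss1 a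
  have hcard : ((Finset.Ico 1 a).card : ℤ) = (a : ℤ) - 1 := by
    rw [Nat.card_Ico]; omega
  have hexpand : ∑ j ∈ Finset.Ico 1 a,
      ((2 * (j:ℤ) - a) * (2 * (((u * j : ZMod a)).val : ℤ) - a))
      = 4 * T - (a:ℤ)^2 * ((a:ℤ) - 1) := by
    have e1 : ∀ j ∈ Finset.Ico 1 a,
        (2 * (j:ℤ) - a) * (2 * (((u * j : ZMod a)).val : ℤ) - a)
          = 4 * ((j:ℤ) * ((u * j : ZMod a)).val) - 2 * a * (j:ℤ)
            - 2 * a * (((u * j : ZMod a)).val : ℤ) + (a:ℤ)^2 := by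
      intro j hj; ring
    rw [Finset.sum_congr rfl e1]
    rw [Finset.sum_add_distrib, Finset.sum_sub_distrib, Finset.sum_sub_distrib,
      ← Finset.mul_sum, ← Finset.mul_sum, ← Finset.mul_sum, Finset.sum_const, nsmul_eq_mul,
      hcard, ← hT, ← hS1, hsm]
    linear_combination (-2*(a:ℤ)) * h2S1
  -- chain of equivalences
  have key1 : (1 / (a:ℝ)) * (-(1/(a:ℝ)) * ∑ j ∈ Finset.Ico 1 a,
      (((2 * j - a) * (2 * (((u * j : ZMod a)).val : ℤ) - a) : ℤ) : ℝ)) = 0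
      ↔ (∑ j ∈ Finset.Ico 1 a,
        ((2 * (j:ℤ) - a) * (2 * (((u * j : ZMod a)).val : ℤ) - a)) : ℤ) = 0 := by
    have hcast : ∑ j ∈ Finset.Ico 1 a,
        (((2 * j - a) * (2 * (((u * j : ZMod a)).val : ℤ) - a) : ℤ) : ℝ)
        = ((∑ j ∈ Finset.Ico 1 a,
          ((2 * (j:ℤ) - a) * (2 * (((u * j : ZMod a)).val : ℤ) - a)) : ℤ) : ℝ) := by
      push_cast
      ring
    rw [hcast, mul_eq_zero, mul_eq_zero]
    constructor
    · rintro (h | h | h)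
      · exact absurd h (by simpa using haR)
      · exact absurd h (by simpa using haR)
      · exact_mod_cast h
    · intro h
      right; right
      exact_mod_cast h
  rw [key1, hexpand, sub_eq_zero]
  rw [arith_iff hu]
  -- final: u^2 = -1 ↔ a ∣ b^2 + c^2
  have hcu2 : ((c : ZMod a))^2 * u^2 = ((b : ZMod a))^2 := by
    rw [← mul_pow, huc]; ring
  have hfin : (u^2 = -1) ↔ ((b : ZMod a)^2 + (c : ZMod a)^2 = 0) := by
    constructor
    · intro h
      rw [h] at hcu2
      linear_combination -hcu2
    · intro h
      have hc2 : IsUnit (((c : ZMod a))^2) := hc.pow 2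
      have h0 : ((c : ZMod a))^2 * (u^2 + 1) = 0 := by linear_combination hcu2 + h
      have h2 := (hc2.mul_right_eq_zero).mp h0
      linear_combination h2
  rw [hfin]
  have hcast2 : (((b^2 + c^2 : ℤ)) : ZMod a) = (b : ZMod a)^2 + (c : ZMod a)^2 := by
    push_cast; ring
  rw [← ZMod.intCast_zmod_eq_zero_iff_dvd, hcast2]
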